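/- Let ω = e^{-φ} be a regular weight in the class 𝒲 and let φ₀ be an analytic self-map of the unit disk 𝔻. If ζ ∈ ∂𝔻 satisfies d_{φ₀}(ζ) > 1 (including d_{φ₀}(ζ) = ∞), then lim_{z→ζ} ω(z)/ω(φ₀(z)) = 0. -/

import Mathlib

open MeasureTheory Filter Set Topology ComplexConjugate
open scoped ENNReal NNReal

noncomputable section

/-- The open unit disk in `ℂ`. -/
def UD : Set ℂ := Metric.ball 0 1

/-- The normalized area measure on `ℂ` (planar Lebesgue measure divided by `π`),
so that `UD` has measure `1`. -/
def dA : Measure ℂ := (ENNReal.ofReal (1 / Real.pi)) • (volume : Measure ℂ)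

/-- The Laplacian of a function `f : ℂ → ℝ`, as the sum of the second derivatives in the
horizontal and the vertical direction. -/
def lap (f : ℂ → ℝ) (z : ℂ) : ℝ :=
  iteratedDeriv 2 (fun t : ℝ => f (z + (t : ℂ))) 0 +
    iteratedDeriv 2 (fun t : ℝ => f (z + (t : ℂ) * Complex.I)) 0

/-- `τ = (Δφ)^{-1/2}`. -/
def tauOf (φ : ℂ → ℝ) (z : ℂ) : ℝ := (lap φ z) ^ (-(1 / 2) : ℝ)

/-- The radial profile of `τ`. -/
def tauR (φ : ℂ → ℝ) (r : ℝ) : ℝ := tauOf φ ((r : ℂ))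

/-- The weight `ω = e^{-φ}`. -/
def wt (φ : ℂ → ℝ) (z : ℂ) : ℝ := Real.exp (-φ z)

/-- The radial profile of the weight `ω = e^{-φ}`. -/
def wtR (φ : ℂ → ℝ) (r : ℝ) : ℝ := wt φ ((r : ℂ))

/-- The filter of approach to the boundary of the disk: `|z| → 1⁻`. -/
def toBdry : Filter ℂ := Filter.comap (fun z : ℂ => ‖z‖) (nhdsWithin 1 (Set.Iio 1))

/-- The class `𝒲` of exponential type weights `ω = e^{-φ}`. -/
structure IsWeightW (φ : ℂ → ℝ) : Prop where
  smooth : ContDiffOn ℝ 2 φ UD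
  radial : ∀ z ∈ UD, φ z = φ ((‖z‖ : ℂ))
  lap_lb : ∃ c : ℝ, 0 < c ∧ ∀ z ∈ UD, c ≤ lap φ z
  tau_decr : ∀ r s : ℝ, 0 ≤ r → r ≤ s → s < 1 → tauR φ s ≤ tauR φ r
  tau_to_zero : Tendsto (tauR φ) (nhdsWithin 1 (Set.Iio 1)) (nhds 0)
  tau_deriv_to_zero : Tendsto (deriv (tauR φ)) (nhdsWithin 1 (Set.Iio 1)) (nhds 0)
  extra : (∃ c : ℝ, 0 < c ∧
      MonotoneOn (fun r : ℝ => tauR φ r * (1 - r) ^ (-c)) (Set.Ico (0 : ℝ) 1)) ∨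
    Tendsto (fun r : ℝ => deriv (tauR φ) r * Real.log (1 / tauR φ r))
      (nhdsWithin 1 (Set.Iio 1)) (nhds 0)

/-- A weight `ω = e^{-φ}` is regular: `ω(1-δt)/ω(1-t) → 0` as `t → 0⁺`, for every `0<δ<1`. -/
def IsRegularWt (φ : ℂ → ℝ) : Prop :=
  ∀ δ : ℝ, 0 < δ → δ < 1 →
    Tendsto (fun t : ℝ => wtR φ (1 - δ * t) / wtR φ (1 - t))
      (nhdsWithin 0 (Set.Ioi 0)) (nhds 0)

/-- An analytic self-map of the unit disk. -/
def IsSelfMapD (φ₀ : ℂ → ℂ) : Prop :=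
  DifferentiableOn ℂ φ₀ UD ∧ Set.MapsTo φ₀ UD UD

/-- `∫_𝔻 |f|^p ω dA` as a lower integral. -/
def apInt (p : ℝ) (φ : ℂ → ℝ) (f : ℂ → ℂ) : ℝ≥0∞ :=
  ∫⁻ z in UD, ENNReal.ofReal (‖f z‖ ^ p * wt φ z) ∂dA

/-- Membership in the weighted Bergman space `A^p(ω)`, `ω = e^{-φ}`. -/
def MemAp (p : ℝ) (φ : ℂ → ℝ) (f : ℂ → ℂ) : Prop :=
  DifferentiableOn ℂ f UD ∧ apInt p φ f < ⊤

/-- Boundedness of the composition operator `C_{φ₀}` on `A^p(ω)`. -/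
def CompBoundedAp (p : ℝ) (φ : ℂ → ℝ) (φ₀ : ℂ → ℂ) : Prop :=
  ∃ C : ℝ, 0 < C ∧ ∀ f : ℂ → ℂ, DifferentiableOn ℂ f UD →
    apInt p φ (f ∘ φ₀) ≤ ENNReal.ofReal C * apInt p φ f

/-- Boundedness of the weighted composition operator `uC_{φ₀}` on `A²(ω)`. -/
def WCompBounded (φ : ℂ → ℝ) (u φ₀ : ℂ → ℂ) : Prop :=
  ∃ C : ℝ, 0 < C ∧ ∀ f : ℂ → ℂ, DifferentiableOn ℂ f UD →
    apInt 2 φ (fun z => u z * f (φ₀ z)) ≤ ENNReal.ofReal C * apInt 2 φ f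

/-- The angular-derivative type quantity `d_{φ₀}(ζ) = liminf_{z→ζ} (1-|φ₀ z|)/(1-|z|)`. -/
def angD (φ₀ : ℂ → ℂ) (ζ : ℂ) : ℝ≥0∞ :=
  Filter.liminf
    (fun z => ENNReal.ofReal ((1 - ‖φ₀ z‖) / (1 - ‖z‖)))
    (nhdsWithin ζ UD)

/-- `K` is the reproducing kernel of `A²(ω)`: `K z` is the kernel function `K_z`. -/
structure IsBergmanKernel (φ : ℂ → ℝ) (K : ℂ → ℂ → ℂ) : Prop where
  mem : ∀ z ∈ UD, MemAp 2 φ (K z)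
  herm : ∀ z ∈ UD, ∀ w ∈ UD, K z w = conj (K w z)
  pos : ∀ z ∈ UD, 0 < (K z z).re
  reproducing : ∀ f : ℂ → ℂ, MemAp 2 φ f → ∀ z ∈ UD,
    f z = ∫ ξ in UD, f ξ * conj (K z ξ) * ((wt φ ξ : ℂ)) ∂dA

/-- The normalized reproducing kernel `k_z = K_z/‖K_z‖`, using `‖K_z‖² = K(z,z)`. -/
def normKer (φ : ℂ → ℝ) (K : ℂ → ℂ → ℂ) (z ξ : ℂ) : ℂ :=
  K z ξ / ((Real.sqrt ((K z z).re) : ℂ))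

/-- The Berezin transform `μ̃(z) = ∫ |k_z|² ω dμ` of a measure `μ`. -/
def berezinM (φ : ℂ → ℝ) (K : ℂ → ℂ → ℂ) (μ : Measure ℂ) (z : ℂ) : ℝ≥0∞ :=
  ∫⁻ ξ, ENNReal.ofReal (‖normKer φ K z ξ‖ ^ 2 * wt φ ξ) ∂μ

/-- The `φ₀`-Berezin transform of `|u|²`:
`B_{φ₀}(|u|²)(z) = ∫_𝔻 |k_z(φ₀ ξ)|² |u ξ|² ω(ξ) dA(ξ)`. -/
def berezinPhi (φ : ℂ → ℝ) (K : ℂ → ℂ → ℂ) (φ₀ u : ℂ → ℂ) (z : ℂ) : ℝ≥0∞ :=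
  ∫⁻ ξ in UD, ENNReal.ofReal
    (‖normKer φ K z (φ₀ ξ)‖ ^ 2 * ‖u ξ‖ ^ 2 * wt φ ξ) ∂dA

/-- `m_τ = min(1, C₁⁻¹, C₂⁻¹)/4`. -/
def mtau (C₁ C₂ : ℝ) : ℝ := min 1 (min C₁⁻¹ C₂⁻¹) / 4

/-- The properties `(L)` of the function `τ`, with constants `C₁, C₂`. -/
structure PropL (τ : ℂ → ℝ) (C₁ C₂ : ℝ) : Prop where
  pos : ∀ z ∈ UD, 0 < τ z
  bound : ∀ z ∈ UD, τ z ≤ C₁ * (1 - ‖z‖)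
  lip : ∀ z ∈ UD, ∀ ξ ∈ UD, |τ z - τ ξ| ≤ C₂ * ‖z - ξ‖

/-- A `δ`-sequence (as in the covering lemma of Oleinik). -/
def IsDeltaSeq (τ : ℂ → ℝ) (δ : ℝ) (a : ℕ → ℂ) : Prop :=
  (∀ k, a k ∈ UD) ∧
  (∀ j k : ℕ, j ≠ k → a j ∉ Metric.ball (a k) (δ * τ (a k))) ∧
  (⋃ k, Metric.ball (a k) (δ * τ (a k))) = UD

/-- The averaging function `μ̂_δ(z) = μ(D(δτ(z)))/|D(δτ(z))|` (normalized area). -/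
def avgM (τ : ℂ → ℝ) (μ : Measure ℂ) (δ : ℝ) (z : ℂ) : ℝ≥0∞ :=
  μ (Metric.ball z (δ * τ z)) / ENNReal.ofReal ((δ * τ z) ^ 2)

/-- `μ` is a Carleson measure for `A^p(ω)`: the embedding `A^p(ω) ⊆ L^p(ω dμ)` is bounded. -/
def IsCarleson (p : ℝ) (φ : ℂ → ℝ) (μ : Measure ℂ) : Prop :=
  ∃ C : ℝ, 0 < C ∧ ∀ f : ℂ → ℂ, DifferentiableOn ℂ f UD →
    (∫⁻ z, ENNReal.ofReal (‖f z‖ ^ p * wt φ z) ∂μ) ≤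
      ENNReal.ofReal C * apInt p φ f

/-- The embedding `A^p(ω) → L^p(ω dμ)` is compact: from any bounded sequence of
holomorphic functions one can extract a subsequence which is Cauchy in `L^p(ω dμ)`. -/
def IsCompactCarleson (p : ℝ) (φ : ℂ → ℝ) (μ : Measure ℂ) : Prop :=
  ∀ f : ℕ → ℂ → ℂ, (∀ n, DifferentiableOn ℂ (f n) UD) → (∀ n, apInt p φ (f n) ≤ 1) →
    ∃ σ : ℕ → ℕ, StrictMono σ ∧ ∀ ε : ℝ, 0 < ε → ∃ N : ℕ, ∀ m ≥ N, ∀ n ≥ N,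
      (∫⁻ z, ENNReal.ofReal (‖f (σ m) z - f (σ n) z‖ ^ p * wt φ z) ∂μ) ≤
        ENNReal.ofReal ε

/-- The measure `ω dA` restricted to the disk. -/
def wMeasure (φ : ℂ → ℝ) : Measure ℂ :=
  (dA.restrict UD).withDensity fun z => ENNReal.ofReal (wt φ z)

/-- The Bergman space `A²(ω)` as a submodule of `L²(ω dA)`. -/
def bergmanSubmodule (φ : ℂ → ℝ) : Submodule ℂ (Lp ℂ 2 (wMeasure φ)) where
  carrier := {f | ∃ g : ℂ → ℂ, DifferentiableOn ℂ g UD ∧ ⇑f =ᵐ[wMeasure φ] g}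
  add_mem' := by
    rintro f₁ f₂ ⟨g₁, hg₁, e₁⟩ ⟨g₂, hg₂, e₂⟩
    exact ⟨g₁ + g₂, hg₁.add hg₂, (Lp.coeFn_add f₁ f₂).trans (e₁.add e₂)⟩
  zero_mem' := ⟨0, differentiableOn_const 0, Lp.coeFn_zero ℂ 2 _⟩
  smul_mem' := by
    rintro c f ⟨g, hg, e⟩
    exact ⟨c • g, hg.const_smul c, (Lp.coeFn_smul c f).trans (e.const_smul c)⟩

/-- The Bergman space `A²(ω)`, as a (pre-)Hilbert space. -/
abbrev BergSp (φ : ℂ → ℝ) := ↥(bergmanSubmodule φ)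

/-- `T` represents the weighted composition operator `uC_{φ₀}` on `A²(ω)`. -/
def RepWComp (φ : ℂ → ℝ) (u φ₀ : ℂ → ℂ) (T : BergSp φ →L[ℂ] BergSp φ) : Prop :=
  ∀ (f : BergSp φ) (g : ℂ → ℂ), DifferentiableOn ℂ g UD →
    ⇑(f : Lp ℂ 2 (wMeasure φ)) =ᵐ[wMeasure φ] g →
    ⇑(T f : Lp ℂ 2 (wMeasure φ)) =ᵐ[wMeasure φ] fun z => u z * g (φ₀ z)

/-- The essential norm of an operator: the distance to the compact operators. -/
def essNorm {H : Type} [NormedAddCommGroup H] [NormedSpace ℂ H] (T : H →L[ℂ] H) : ℝ :=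
  sInf ((fun S : H →L[ℂ] H => ‖T - S‖) '' {S | IsCompactOperator ⇑S})

/-- Membership in the Schatten class `S_p`: `T` admits a singular value decomposition
`T x = ∑ sₙ ⟨x, eₙ⟩ fₙ` with `(sₙ) ∈ ℓ^p`. -/
def MemSchatten (p : ℝ) {H : Type} [NormedAddCommGroup H] [InnerProductSpace ℂ H]
    (T : H →L[ℂ] H) : Prop :=
  ∃ (e f : ℕ → H) (s : ℕ → ℝ), Orthonormal ℂ e ∧ Orthonormal ℂ f ∧ (∀ n, 0 ≤ s n) ∧
    Summable (fun n => s n ^ p) ∧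
    ∀ x : H, T x = ∑' n, (s n : ℂ) • ((inner ℂ (e n) x : ℂ) • f n)

/-- The Toeplitz-type integral operator `T_μ f(z) = ∫ f(ξ) K(z,ξ) ω(ξ) dμ(ξ)`. -/
def toeplitzFun (φ : ℂ → ℝ) (K : ℂ → ℂ → ℂ) (μ : Measure ℂ) (f : ℂ → ℂ) (z : ℂ) : ℂ :=
  ∫ ξ, f ξ * conj (K z ξ) * ((wt φ ξ : ℂ)) ∂μ

/-- `T` represents the Toeplitz operator `T_μ` on `A²(ω)`. -/
def RepToeplitz (φ : ℂ → ℝ) (K : ℂ → ℂ → ℂ) (μ : Measure ℂ)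
    (T : BergSp φ →L[ℂ] BergSp φ) : Prop :=
  ∀ (f : BergSp φ) (g : ℂ → ℂ), DifferentiableOn ℂ g UD →
    ⇑(f : Lp ℂ 2 (wMeasure φ)) =ᵐ[wMeasure φ] g →
    ⇑(T f : Lp ℂ 2 (wMeasure φ)) =ᵐ[wMeasure φ] toeplitzFun φ K μ g

/-- The pullback measure `dμ^{φ₀}_{ω,u} = ω⁻¹ d((|u|²ω dA) ∘ φ₀⁻¹)`. -/
def pullbackM (φ : ℂ → ℝ) (u φ₀ : ℂ → ℂ) : Measure ℂ :=
  (Measure.map φ₀ ((dA.restrict UD).withDensity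
      fun z => ENNReal.ofReal (‖u z‖ ^ 2 * wt φ z))).withDensity
    fun z => ENNReal.ofReal (wt φ z)⁻¹

/-- The square of the operator norm of `uC_{φ₀}` on `A²(ω)`, as a supremum of ratios. -/
def wcompNormSq (φ : ℂ → ℝ) (u φ₀ : ℂ → ℂ) : ℝ≥0∞ :=
  ⨆ f : {f : ℂ → ℂ // DifferentiableOn ℂ f UD},
    apInt 2 φ (fun z => u z * f.1 (φ₀ z)) / apInt 2 φ f.1

/-- `M_{φ₀}(r) = sup_θ |φ₀(r e^{iθ})|`. -/
def Mrad (φ₀ : ℂ → ℂ) (r : ℝ) : ℝ :=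
  ⨆ θ : ℝ, ‖φ₀ ((r : ℂ) * Complex.exp ((θ : ℂ) * Complex.I))‖

/-- `φ` is subharmonic on the disk: upper semicontinuous and satisfying the sub-mean
value inequality on circles. -/
def SubharmonicOnD (φ : ℂ → ℝ) : Prop :=
  UpperSemicontinuousOn φ UD ∧
  ∀ z ∈ UD, ∀ r : ℝ, 0 < r → Metric.closedBall z r ⊆ UD →
    φ z ≤ (1 / (2 * Real.pi)) *
      ∫ θ in (0 : ℝ)..(2 * Real.pi), φ (z + (r : ℂ) * Complex.exp ((θ : ℂ) * Complex.I))

end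


section auxlemmas

private lemma iteratedDeriv_two' (f : ℝ → ℝ) : iteratedDeriv 2 f = deriv (deriv f) := by
  have h2 : (2 : ℕ) = 0 + 1 + 1 := rfl
  rw [h2, iteratedDeriv_succ, iteratedDeriv_succ, iteratedDeriv_zero]

private lemma mem_UD_iff' {z : ℂ} : z ∈ UD ↔ ‖z‖ < 1 := by
  simp [UD, Metric.mem_ball, Complex.dist_eq]

private lemma deriv2_sqrt_comp {g : ℝ → ℝ} {r : ℝ} (hr : 0 < r) (hr1 : r < 1)
    (hg : ContDiffOn ℝ 2 g (Set.Ioo (-1) 1)) :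
    deriv (deriv (fun t : ℝ => g (Real.sqrt (r ^ 2 + t ^ 2)))) 0 = deriv g r / r := by
  have hr0 : r ≠ 0 := hr.ne'
  have hS : IsOpen {t : ℝ | r ^ 2 + t ^ 2 < 1} :=
    isOpen_lt (by continuity) continuous_const
  have h0S : (0 : ℝ) ∈ {t : ℝ | r ^ 2 + t ^ 2 < 1} := by
    simp only [Set.mem_setOf_eq]; nlinarith
  have hψpos : ∀ t : ℝ, 0 < Real.sqrt (r ^ 2 + t ^ 2) :=
    fun t => Real.sqrt_pos.mpr (by positivity)
  have hψmem : ∀ t ∈ {t : ℝ | r ^ 2 + t ^ 2 < 1},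
      Real.sqrt (r ^ 2 + t ^ 2) ∈ Set.Ioo (-1 : ℝ) 1 := by
    intro t ht
    exact ⟨by linarith [hψpos t], (Real.sqrt_lt' one_pos).mpr (by simpa using ht)⟩
  have hψ0 : Real.sqrt (r ^ 2 + 0 ^ 2) = r := by
    rw [show r ^ 2 + 0 ^ 2 = r ^ 2 by ring, Real.sqrt_sq hr.le]
  have hψd : ∀ t : ℝ, HasDerivAt (fun t : ℝ => Real.sqrt (r ^ 2 + t ^ 2))
      (t / Real.sqrt (r ^ 2 + t ^ 2)) t := by
    intro t
    have h1 : HasDerivAt (fun t : ℝ => r ^ 2 + t ^ 2) (2 * t) t := by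
      simpa using (hasDerivAt_pow 2 t).const_add (r ^ 2)
    have h2 : HasDerivAt Real.sqrt (1 / (2 * Real.sqrt (r ^ 2 + t ^ 2))) (r ^ 2 + t ^ 2) :=
      Real.hasDerivAt_sqrt (by positivity)
    have h3 := h2.comp t h1
    refine HasDerivAt.congr_deriv h3 ?_
    have hne : Real.sqrt (r ^ 2 + t ^ 2) ≠ 0 := (hψpos t).ne'
    field_simp
  have hg1 : ∀ x ∈ Set.Ioo (-1 : ℝ) 1, HasDerivAt g (deriv g x) x := by
    intro x hx
    exact ((hg.differentiableOn two_ne_zero).differentiableAt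
      (isOpen_Ioo.mem_nhds hx)).hasDerivAt
  have hg2 : ContDiffOn ℝ 1 (deriv g) (Set.Ioo (-1 : ℝ) 1) :=
    hg.deriv_of_isOpen isOpen_Ioo (by norm_num)
  have hrI : r ∈ Set.Ioo (-1 : ℝ) 1 := ⟨by linarith, hr1⟩
  have hdg : HasDerivAt (deriv g) (deriv (deriv g) r) r :=
    ((hg2.differentiableOn one_ne_zero).differentiableAt (isOpen_Ioo.mem_nhds hrI)).hasDerivAt
  have hq : ∀ t ∈ {t : ℝ | r ^ 2 + t ^ 2 < 1},
      HasDerivAt (fun t : ℝ => g (Real.sqrt (r ^ 2 + t ^ 2)))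
        (deriv g (Real.sqrt (r ^ 2 + t ^ 2)) * (t / Real.sqrt (r ^ 2 + t ^ 2))) t := by
    intro t ht
    have h := (hg1 _ (hψmem t ht)).comp t (hψd t)
    exact h
  have hde : deriv (fun t : ℝ => g (Real.sqrt (r ^ 2 + t ^ 2))) =ᶠ[nhds (0 : ℝ)]
      fun t : ℝ => deriv g (Real.sqrt (r ^ 2 + t ^ 2)) * (t / Real.sqrt (r ^ 2 + t ^ 2)) :=
    Filter.eventually_of_mem (hS.mem_nhds h0S) (fun t ht => (hq t ht).deriv)
  rw [hde.deriv_eq]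
  have hdg0 : HasDerivAt (deriv g) (deriv (deriv g) r) (Real.sqrt (r ^ 2 + 0 ^ 2)) := by
    rw [hψ0]; exact hdg
  have hA : HasDerivAt (fun t : ℝ => deriv g (Real.sqrt (r ^ 2 + t ^ 2))) 0 0 := by
    have h := hdg0.comp 0 (hψd 0)
    exact h.congr_deriv (by simp)
  have hB : HasDerivAt (fun t : ℝ => t / Real.sqrt (r ^ 2 + t ^ 2)) (1 / r) 0 := by
    have h := (hasDerivAt_id (0 : ℝ)).div (hψd 0) (hψpos 0).ne'
    refine HasDerivAt.congr_deriv h ?_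
    rw [hψ0]
    field_simp
    ring
  have hE : HasDerivAt
      (fun t : ℝ => deriv g (Real.sqrt (r ^ 2 + t ^ 2)) * (t / Real.sqrt (r ^ 2 + t ^ 2)))
      (deriv g r / r) 0 := by
    have h := hA.mul hB
    refine HasDerivAt.congr_deriv h ?_
    rw [hψ0]
    field_simp
    ring
  exact hE.deriv

private lemma profile_mono (φ : ℂ → ℝ) (hsm : ContDiffOn ℝ 2 φ UD)
    (hrad : ∀ z ∈ UD, φ z = φ ((‖z‖ : ℂ)))
    {c : ℝ} (hc : 0 < c) (hlap : ∀ z ∈ UD, c ≤ lap φ z) :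
    MonotoneOn (fun r : ℝ => φ ((r : ℂ))) (Set.Ico 0 1) := by
  have hmem : ∀ r : ℝ, r ∈ Set.Ioo (-1 : ℝ) 1 → ((r : ℂ)) ∈ UD := by
    intro r hr
    rw [mem_UD_iff']
    rw [Complex.norm_real, Real.norm_eq_abs]
    exact abs_lt.mpr ⟨hr.1, hr.2⟩
  set g : ℝ → ℝ := fun r => φ ((r : ℂ)) with hgdef
  have hof : ContDiff ℝ 2 (fun r : ℝ => (r : ℂ)) := by
    have h := Complex.ofRealCLM.contDiff (n := 2)
    exact h
  have hg : ContDiffOn ℝ 2 g (Set.Ioo (-1 : ℝ) 1) :=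
    hsm.comp hof.contDiffOn (fun r hr => hmem r hr)
  have hg1 : ∀ x ∈ Set.Ioo (-1 : ℝ) 1, HasDerivAt g (deriv g x) x := by
    intro x hx
    exact ((hg.differentiableOn two_ne_zero).differentiableAt
      (isOpen_Ioo.mem_nhds hx)).hasDerivAt
  have hg2 : ContDiffOn ℝ 1 (deriv g) (Set.Ioo (-1 : ℝ) 1) :=
    hg.deriv_of_isOpen isOpen_Ioo (by norm_num)
  -- the Laplacian identity on the positive radius
  have hlapg : ∀ r : ℝ, r ∈ Set.Ioo (0 : ℝ) 1 →
      c ≤ deriv (deriv g) r + deriv g r / r := by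
    intro r hr
    have hrI : r ∈ Set.Ioo (-1 : ℝ) 1 := ⟨by linarith [hr.1], hr.2⟩
    have hrUD : ((r : ℂ)) ∈ UD := hmem r hrI
    have h := hlap _ hrUD
    have hhor : iteratedDeriv 2 (fun t : ℝ => φ ((r : ℂ) + (t : ℂ))) 0
        = deriv (deriv g) r := by
      have hfun : (fun t : ℝ => φ ((r : ℂ) + (t : ℂ))) = fun t : ℝ => g (r + t) := by
        funext t
        simp only [hgdef]
        norm_cast
      rw [hfun, iteratedDeriv_comp_const_add 2 g r]
      rw [iteratedDeriv_two']
      norm_num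
    have hver : iteratedDeriv 2 (fun t : ℝ => φ ((r : ℂ) + (t : ℂ) * Complex.I)) 0
        = deriv g r / r := by
      have hS : IsOpen {t : ℝ | r ^ 2 + t ^ 2 < 1} :=
        isOpen_lt (by continuity) continuous_const
      have h0S : (0 : ℝ) ∈ {t : ℝ | r ^ 2 + t ^ 2 < 1} := by
        simp only [Set.mem_setOf_eq]; nlinarith [hr.1, hr.2]
      have hfe : (fun t : ℝ => φ ((r : ℂ) + (t : ℂ) * Complex.I)) =ᶠ[nhds (0 : ℝ)]
          fun t : ℝ => g (Real.sqrt (r ^ 2 + t ^ 2)) := by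
        filter_upwards [hS.mem_nhds h0S] with t ht
        have habs : ‖(r : ℂ) + (t : ℂ) * Complex.I‖
            = Real.sqrt (r ^ 2 + t ^ 2) := Complex.norm_add_mul_I r t
        have hmemUD : ((r : ℂ) + (t : ℂ) * Complex.I) ∈ UD := by
          rw [mem_UD_iff', habs]
          exact (Real.sqrt_lt' one_pos).mpr (by simpa using ht)
        rw [hrad _ hmemUD, habs]
      rw [iteratedDeriv_two', hfe.deriv.deriv_eq]
      exact deriv2_sqrt_comp hr.1 hr.2 hg
    simp only [lap] at h
    rw [hhor, hver] at h
    exact h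
  -- u r = r g'(r) - c/2 r² is monotone on [0,1)
  have hud : ∀ r ∈ Set.Ioo (0 : ℝ) 1, HasDerivAt
      (fun r : ℝ => r * deriv g r - c / 2 * r ^ 2)
      (1 * deriv g r + r * deriv (deriv g) r - c / 2 * (2 * r)) r := by
    intro r hr
    have hrI : r ∈ Set.Ioo (-1 : ℝ) 1 := ⟨by linarith [hr.1], hr.2⟩
    have hdg : HasDerivAt (deriv g) (deriv (deriv g) r) r :=
      ((hg2.differentiableOn one_ne_zero).differentiableAt (isOpen_Ioo.mem_nhds hrI)).hasDerivAt
    have h1 : HasDerivAt (fun r : ℝ => r * deriv g r)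
        (1 * deriv g r + r * deriv (deriv g) r) r := (hasDerivAt_id r).mul hdg
    have h2 : HasDerivAt (fun r : ℝ => c / 2 * r ^ 2) (c / 2 * (2 * r)) r := by
      simpa using (hasDerivAt_pow 2 r).const_mul (c / 2)
    exact h1.sub h2
  have humono : MonotoneOn (fun r : ℝ => r * deriv g r - c / 2 * r ^ 2)
      (Set.Ico (0 : ℝ) 1) := by
    apply monotoneOn_of_deriv_nonneg (convex_Ico 0 1)
    · apply ContinuousOn.sub
      · exact continuousOn_id.mul (hg2.continuousOn.mono
          (fun x hx => ⟨by linarith [hx.1], hx.2⟩))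
      · exact (continuous_const.mul (continuous_pow 2)).continuousOn
    · intro x hx
      rw [interior_Ico] at hx
      exact ((hud x hx).differentiableAt).differentiableWithinAt
    · intro x hx
      rw [interior_Ico] at hx
      rw [(hud x hx).deriv]
      have hkey := hlapg x hx
      have hx0 : (0 : ℝ) < x := hx.1
      have hB : deriv g x / x * x = deriv g x := div_mul_cancel₀ _ hx0.ne'
      have hmul := mul_le_mul_of_nonneg_right hkey hx0.le
      nlinarith [hB, hmul]
  -- hence g' ≥ 0 on (0,1)
  have hderiv_nonneg : ∀ x ∈ Set.Ioo (0 : ℝ) 1, 0 ≤ deriv g x := by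
    intro x hx
    have h0m : (0 : ℝ) ∈ Set.Ico (0 : ℝ) 1 := ⟨le_rfl, one_pos⟩
    have hxm : x ∈ Set.Ico (0 : ℝ) 1 := ⟨hx.1.le, hx.2⟩
    have h0 := humono h0m hxm hx.1.le
    simp only at h0
    have hu0 : (0 : ℝ) * deriv g 0 - c / 2 * (0 : ℝ) ^ 2 = 0 := by ring
    rw [hu0] at h0
    nlinarith [h0, hc, hx.1, mul_pos hx.1 hx.1]
  -- conclude
  apply monotoneOn_of_deriv_nonneg (convex_Ico 0 1)
  · exact hg.continuousOn.mono (fun x hx => ⟨by linarith [hx.1], hx.2⟩)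
  · intro x hx
    rw [interior_Ico] at hx
    exact (hg1 x ⟨by linarith [hx.1], hx.2⟩).differentiableAt.differentiableWithinAt
  · intro x hx
    rw [interior_Ico] at hx
    exact hderiv_nonneg x hx

end auxlemmas

theorem stmt2 (φ : ℂ → ℝ) (φ₀ : ℂ → ℂ) (hω : IsWeightW φ) (hreg : IsRegularWt φ)
    (hφ₀ : IsSelfMapD φ₀) (ζ : ℂ) (hζ : ‖ζ‖ = 1) (hd : 1 < angD φ₀ ζ) :
    Filter.Tendsto (fun z => wt φ z / wt φ (φ₀ z)) (nhdsWithin ζ UD) (nhds 0) := by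
  classical
  obtain ⟨c, hc, hlap⟩ := hω.lap_lb
  have hmono := profile_mono φ hω.smooth hω.radial hc hlap
  obtain ⟨δ, hδ0, hδ1', hδd⟩ := (ENNReal.lt_iff_exists_real_btwn).mp hd
  have hδ1 : 1 < δ := ENNReal.one_lt_ofReal.mp hδ1'
  have hδpos : (0 : ℝ) < δ := lt_trans one_pos hδ1
  have hev : ∀ᶠ z in nhdsWithin ζ UD,
      δ < (1 - ‖φ₀ z‖) / (1 - ‖z‖) := by
    have h := Filter.eventually_lt_of_lt_liminf hδd
    filter_upwards [h] with z hz
    by_contra hcon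
    push_neg at hcon
    exact absurd (ENNReal.ofReal_le_ofReal hcon) (not_le.mpr hz)
  have habs : Filter.Tendsto (fun z : ℂ => ‖z‖) (nhdsWithin ζ UD) (nhds 1) := by
    have h : Filter.Tendsto (fun z : ℂ => ‖z‖) (nhdsWithin ζ UD)
        (nhds (‖ζ‖)) :=
      (continuous_norm.tendsto ζ).mono_left nhdsWithin_le_nhds
    rwa [hζ] at h
  have ht : Filter.Tendsto (fun z : ℂ => 1 - ‖z‖) (nhdsWithin ζ UD)
      (nhdsWithin 0 (Set.Ioi 0)) := by
    rw [tendsto_nhdsWithin_iff]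
    constructor
    · have h2 : Filter.Tendsto (fun z : ℂ => 1 - ‖z‖) (nhdsWithin ζ UD)
          (nhds (1 - 1)) := Filter.Tendsto.sub tendsto_const_nhds habs
      simpa using h2
    · filter_upwards [self_mem_nhdsWithin] with z hz
      have h1 : ‖z‖ < 1 := mem_UD_iff'.mp hz
      simp only [Set.mem_Ioi]
      linarith
  have hδinv0 : (0 : ℝ) < δ⁻¹ := by positivity
  have hδinv1 : δ⁻¹ < 1 := inv_lt_one_of_one_lt₀ hδ1
  have hregδ := hreg δ⁻¹ hδinv0 hδinv1
  have hscale : Filter.Tendsto (fun t : ℝ => δ * t) (nhdsWithin 0 (Set.Ioi 0))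
      (nhdsWithin 0 (Set.Ioi 0)) := by
    rw [tendsto_nhdsWithin_iff]
    constructor
    · have h : Filter.Tendsto (fun t : ℝ => δ * t) (nhds 0) (nhds (δ * 0)) :=
        (continuous_const.mul continuous_id).tendsto 0
      simpa using h.mono_left nhdsWithin_le_nhds
    · filter_upwards [self_mem_nhdsWithin] with t ht'
      exact Set.mem_Ioi.mpr (mul_pos hδpos (Set.mem_Ioi.mp ht'))
  have hreg' : Filter.Tendsto (fun t : ℝ => wtR φ (1 - t) / wtR φ (1 - δ * t))
      (nhdsWithin 0 (Set.Ioi 0)) (nhds 0) := by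
    have h := hregδ.comp hscale
    have heq : ((fun t : ℝ => wtR φ (1 - δ⁻¹ * t) / wtR φ (1 - t)) ∘ fun t : ℝ => δ * t)
        = fun t : ℝ => wtR φ (1 - t) / wtR φ (1 - δ * t) := by
      funext t
      simp only [Function.comp]
      rw [inv_mul_cancel_left₀ hδpos.ne']
    rwa [heq] at h
  have hcompT : Filter.Tendsto
      (fun z : ℂ => wtR φ (1 - (1 - ‖z‖)) / wtR φ (1 - δ * (1 - ‖z‖)))
      (nhdsWithin ζ UD) (nhds 0) := hreg'.comp ht
  have hsmall : ∀ᶠ z in nhdsWithin ζ UD, 1 - ‖z‖ < δ⁻¹ := by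
    have h1 : ∀ᶠ t : ℝ in nhdsWithin 0 (Set.Ioi 0), t < δ⁻¹ :=
      Filter.eventually_of_mem (mem_nhdsWithin_of_mem_nhds (Iio_mem_nhds hδinv0))
        (fun t h => h)
    exact ht.eventually h1
  refine squeeze_zero' (Filter.Eventually.of_forall fun z => ?_) ?_ hcompT
  · exact div_nonneg (Real.exp_pos _).le (Real.exp_pos _).le
  · filter_upwards [hev, self_mem_nhdsWithin, hsmall] with z hzd hzU hzs
    have hz1 : ‖z‖ < 1 := mem_UD_iff'.mp hzU
    have ht0 : 0 < 1 - ‖z‖ := by linarith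
    have hδt : δ * (1 - ‖z‖) < 1 := by
      calc δ * (1 - ‖z‖) < δ * δ⁻¹ := by
            exact mul_lt_mul_of_pos_left hzs hδpos
        _ = 1 := mul_inv_cancel₀ hδpos.ne'
    have hφz : φ₀ z ∈ UD := hφ₀.2 hzU
    have hφz1 : ‖φ₀ z‖ < 1 := mem_UD_iff'.mp hφz
    have hupper : ‖φ₀ z‖ ≤ 1 - δ * (1 - ‖z‖) := by
      have h := (lt_div_iff₀ ht0).mp hzd
      linarith
    have hwz : wt φ z = wtR φ (1 - (1 - ‖z‖)) := by
      have h1 : (1 : ℝ) - (1 - ‖z‖) = ‖z‖ := by ring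
      rw [h1]
      simp only [wtR, wt]
      rw [hω.radial z hzU]
    have hwφ : wtR φ (1 - δ * (1 - ‖z‖)) ≤ wt φ (φ₀ z) := by
      have hmem1 : ‖φ₀ z‖ ∈ Set.Ico (0 : ℝ) 1 :=
        ⟨norm_nonneg _, hφz1⟩
      have hmem2 : (1 - δ * (1 - ‖z‖)) ∈ Set.Ico (0 : ℝ) 1 :=
        ⟨by linarith, by nlinarith [mul_pos hδpos ht0]⟩
      have hle := hmono hmem1 hmem2 hupper
      simp only at hle
      simp only [wtR, wt]
      rw [hω.radial _ hφz]
      exact Real.exp_le_exp.mpr (by linarith)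
    rw [hwz]
    exact div_le_div_of_nonneg_left (Real.exp_pos _).le (Real.exp_pos _) hwφ
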